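/- Suppose integers a, b₁, d₀, e₀, t, S with S ≥ 0 satisfy e₀²t − 2d₀² = 1, a·t·e₀ − b₁·d₀ = 1, and 2ta² = b₁² + S. Then S ≤ 2, and if S = 0 then 2(1 + 2d₀²) is a perfect square (which is impossible); hence S ∈ {1, 2}. -/
import Mathlib


theorem stmt_19 (a b₁ d₀ e₀ t S : ℤ) (hS : 0 ≤ S)
    (h1 : e₀ ^ 2 * t - 2 * d₀ ^ 2 = 1)
    (h2 : a * t * e₀ - b₁ * d₀ = 1)
    (h3 : 2 * t * a ^ 2 = b₁ ^ 2 + S) :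
    S ≤ 2 ∧ (S = 0 → ∃ k : ℤ, k ^ 2 = 2 * (1 + 2 * d₀ ^ 2)) ∧
      (S = 1 ∨ S = 2) := by
  have key : (b₁ - 2 * d₀) ^ 2 = (1 + 2 * d₀ ^ 2) * (2 - S) := by
    linear_combination (-(b₁ ^ 2) - S) * h1 + 2 * (a * t * e₀ + 1 + b₁ * d₀) * h2 -
      t * e₀ ^ 2 * h3
  have hpos : (0:ℤ) < 1 + 2 * d₀ ^ 2 := by positivity
  have hle : S ≤ 2 := by nlinarith [sq_nonneg (b₁ - 2 * d₀)]
  have hne : S ≠ 0 := by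
    intro h0
    have hk : (b₁ - 2 * d₀) ^ 2 = 2 * (1 + 2 * d₀ ^ 2) := by
      rw [key, h0]; ring
    rcases Int.even_or_odd (b₁ - 2 * d₀) with ⟨m, hm⟩ | ⟨m, hm⟩ <;> rw [hm] at hk
    · have h' : (2 * (m ^ 2 - d₀ ^ 2) - 1) * 2 = 0 := by linear_combination hk
      set x := m ^ 2 - d₀ ^ 2 with hx
      omega
    · have h' : 4 * (m ^ 2 + m - d₀ ^ 2) = 1 := by linear_combination hk
      set x := m ^ 2 + m - d₀ ^ 2 with hx
      omega
  refine ⟨hle, fun h0 => ⟨b₁ - 2 * d₀, by rw [key, h0]; ring⟩, ?_⟩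
  omega
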